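/- Let f : [0,1] → ℝ be concave and let g, ĝ : [0,1] → [0,1] be non-increasing functions such that ∫₀¹ g(u)du = ∫₀¹ ĝ(u)du and for all t ∈ [0,1], ∫₀ᵗ g(u)du ≥ ∫₀ᵗ ĝ(u)du. Then ∫₀¹ f(g(u))du ≤ ∫₀¹ f(ĝ(u))du. -/

import Mathlib

open Set MeasureTheory

lemma slope_pair {f : ℝ → ℝ} (hf : ConcaveOn ℝ (Set.Icc 0 1) f) {p q p' q' : ℝ}
    (hp : p ∈ Set.Icc (0:ℝ) 1) (hq : q ∈ Set.Icc (0:ℝ) 1)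
    (hp' : p' ∈ Set.Icc (0:ℝ) 1) (hq' : q' ∈ Set.Icc (0:ℝ) 1)
    (hpp : p' ≤ p) (hqq : q' ≤ q) (hpq : p ≠ q) (hpq' : p' ≠ q') :
    (f q - f p) / (q - p) ≤ (f q' - f p') / (q' - p') := by
  have h1 : (f q - f p) / (q - p) = slope f p q := (slope_def_field f p q).symm
  have h2 : (f q' - f p') / (q' - p') = slope f p' q' := (slope_def_field f p' q').symm
  rw [h1, h2]
  by_cases hc : p' = q
  · have hqp' : q' ≠ p := by
      intro hh
      have e1 : p ≤ q := by rw [← hh]; exact hqq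
      have e2 : q ≤ p := by rw [← hc]; exact hpp
      exact hpq (le_antisymm e1 e2)
    calc slope f p q ≤ slope f p q' := (hf.slope_anti hp) ⟨hq', hqp'⟩ ⟨hq, hpq.symm⟩ hqq
      _ = slope f q' p := slope_comm f p q'
      _ ≤ slope f q' p' := (hf.slope_anti hq') ⟨hp', hpq'⟩ ⟨hp, hqp'.symm⟩ hpp
      _ = slope f p' q' := slope_comm f q' p'
  · calc slope f p q = slope f q p := slope_comm f p q
      _ ≤ slope f q p' := (hf.slope_anti hq) ⟨hp', hc⟩ ⟨hp, hpq⟩ hpp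
      _ = slope f p' q := slope_comm f q p'
      _ ≤ slope f p' q' := (hf.slope_anti hp') ⟨hq', Ne.symm hpq'⟩ ⟨hq, Ne.symm hc⟩ hqq

lemma concave_bounded {f : ℝ → ℝ} (hf : ConcaveOn ℝ (Set.Icc 0 1) f) :
    ∃ M : ℝ, ∀ x ∈ Set.Icc (0:ℝ) 1, |f x| ≤ M := by
  have h0 : (0:ℝ) ∈ Set.Icc (0:ℝ) 1 := by norm_num
  have h1 : (1:ℝ) ∈ Set.Icc (0:ℝ) 1 := by norm_num
  have lower : ∀ x ∈ Set.Icc (0:ℝ) 1, min (f 0) (f 1) ≤ f x := by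
    intro x hx
    obtain ⟨hx0, hx1⟩ := hx
    have key := hf.2 h0 h1 (by linarith : (0:ℝ) ≤ 1 - x) (by linarith : (0:ℝ) ≤ x)
      (by ring : (1 - x) + x = 1)
    simp only [smul_eq_mul, mul_zero, mul_one, zero_add] at key
    have : min (f 0) (f 1) ≤ (1 - x) * f 0 + x * f 1 := by
      nlinarith [min_le_left (f 0) (f 1), min_le_right (f 0) (f 1)]
    linarith
  have upper : ∀ x ∈ Set.Icc (0:ℝ) 1, f x ≤ 2 * f (1/2) - min (f 0) (f 1) := by
    intro x hx
    obtain ⟨hx0, hx1⟩ := hx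
    have hx' : (1 - x) ∈ Set.Icc (0:ℝ) 1 := ⟨by linarith, by linarith⟩
    have key := hf.2 (Set.mem_Icc.mpr ⟨hx0, hx1⟩) hx'
      (by norm_num : (0:ℝ) ≤ 1/2) (by norm_num : (0:ℝ) ≤ 1/2) (by norm_num)
    simp only [smul_eq_mul] at key
    have heq : (1/2 : ℝ) * x + 1/2 * (1 - x) = 1/2 := by ring
    rw [heq] at key
    have := lower (1 - x) hx'
    linarith
  refine ⟨|2 * f (1/2) - min (f 0) (f 1)| + |min (f 0) (f 1)|, fun x hx => ?_⟩
  have l := lower x hx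
  have u := upper x hx
  rw [abs_le]
  constructor
  · have : -(|min (f 0) (f 1)|) ≤ min (f 0) (f 1) := neg_abs_le _
    have h2 : (0:ℝ) ≤ |2 * f (1/2) - min (f 0) (f 1)| := abs_nonneg _
    linarith
  · have : 2 * f (1/2) - min (f 0) (f 1) ≤ |2 * f (1/2) - min (f 0) (f 1)| := le_abs_self _
    have h2 : (0:ℝ) ≤ |min (f 0) (f 1)| := abs_nonneg _
    linarith

lemma concave_comp_prop {f G : ℝ → ℝ} (hf : ConcaveOn ℝ (Set.Icc 0 1) f)
    (hG : Antitone G) (hGr : ∀ u, G u ∈ Set.Icc (0:ℝ) 1)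
    {a b c : ℝ} (hab : a ≤ b) (hbc : b ≤ c) (hd : f (G b) < f (G a)) :
    f (G c) ≤ f (G b) := by
  set x := G a with hx
  set y := G b with hy
  set z := G c with hz
  have hyx : y ≤ x := hG hab
  have hzy : z ≤ y := hG hbc
  have hxy : y < x := by
    rcases lt_or_eq_of_le hyx with h | h
    · exact h
    · exfalso; rw [h] at hd; exact lt_irrefl _ hd
  rcases lt_or_eq_of_le hzy with hzy' | hzy'
  · by_contra hcon
    push_neg at hcon
    set θ := (x - y) / (x - z) with hθ
    have hxz : z < x := lt_trans hzy' hxy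
    have hθ0 : 0 < θ := div_pos (by linarith) (by linarith)
    have hθ1 : θ < 1 := by
      rw [div_lt_one (by linarith)]; linarith
    have hmul : θ * (x - z) = x - y := by
      rw [hθ, div_mul_cancel₀]; linarith
    have hcomb : θ • z + (1 - θ) • x = y := by
      simp only [smul_eq_mul]
      linear_combination (-1 : ℝ) * hmul
    have key := hf.2 (hGr c) (hGr a) (le_of_lt hθ0)
      (show (0:ℝ) ≤ 1 - θ by linarith) (show θ + (1 - θ) = 1 by ring)
    rw [hcomb] at key
    simp only [smul_eq_mul] at key
    nlinarith
  · rw [← hzy']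

lemma concave_comp_measurable {f G : ℝ → ℝ} (hf : ConcaveOn ℝ (Set.Icc 0 1) f)
    (hG : Antitone G) (hGr : ∀ u, G u ∈ Set.Icc (0:ℝ) 1)
    (hconst : ∀ u ≤ (0:ℝ), G u = G 0) :
    Measurable (fun u => f (G u)) := by
  set D := fun u => f (G u) with hD
  set Q := {u : ℝ | ∃ v, v < u ∧ D u < D v} with hQ
  have hQ0 : ∀ u ∈ Q, (0:ℝ) < u := by
    intro u hu
    obtain ⟨v, hv, hd⟩ := hu
    by_contra hcon
    push_neg at hcon
    have h1 : G v = G 0 := hconst v (le_of_lt (lt_of_lt_of_le hv hcon))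
    have h2 : G u = G 0 := hconst u hcon
    have : D v = D u := by simp only [hD, h1, h2]
    rw [this] at hd; exact lt_irrefl _ hd
  by_cases hem : Q = ∅
  · have hmono : Monotone D := by
      intro v u hvu
      rcases lt_or_eq_of_le hvu with h | h
      · by_contra hcon
        push_neg at hcon
        have : u ∈ Q := ⟨v, h, hcon⟩
        rw [hem] at this; exact this
      · rw [h]
    exact hmono.measurable
  · have hne : Q.Nonempty := Set.nonempty_iff_ne_empty.mpr hem
    have hbdd : BddBelow Q := ⟨0, fun u hu => le_of_lt (hQ0 u hu)⟩
    set u₀ := sInf Q with hu₀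
    have hmono : ∀ v u : ℝ, v ≤ u → u < u₀ → D v ≤ D u := by
      intro v u hvu hu
      have hnotQ : u ∉ Q := fun h => absurd (csInf_le hbdd h) (not_le.mpr hu)
      rcases lt_or_eq_of_le hvu with h | h
      · by_contra hcon
        push_neg at hcon
        exact hnotQ ⟨v, h, hcon⟩
      · rw [h]
    have hanti : ∀ x y : ℝ, u₀ < x → x ≤ y → D y ≤ D x := by
      intro x y hx hxy
      obtain ⟨q, hq, hqx⟩ := exists_lt_of_csInf_lt hne hx
      obtain ⟨v, hv, hd⟩ := hq
      have h1 : D x ≤ D q := concave_comp_prop hf hG hGr (le_of_lt hv) (le_of_lt hqx) hd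
      have h2 : D x < D v := lt_of_le_of_lt h1 hd
      exact concave_comp_prop hf hG hGr (le_of_lt (lt_trans hv hqx)) hxy h2
    apply measurable_of_Iio
    intro r
    have hdecomp : D ⁻¹' (Set.Iio r) =
        {u : ℝ | u < u₀ ∧ D u < r} ∪ {u : ℝ | u₀ < u ∧ D u < r} ∪
        (D ⁻¹' (Set.Iio r) ∩ {u₀}) := by
      ext u
      simp only [Set.mem_preimage, Set.mem_Iio, Set.mem_union, Set.mem_setOf_eq,
        Set.mem_inter_iff, Set.mem_singleton_iff]
      constructor
      · intro h
        rcases lt_trichotomy u u₀ with hc | hc | hc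
        · exact Or.inl (Or.inl ⟨hc, h⟩)
        · exact Or.inr ⟨h, hc⟩
        · exact Or.inl (Or.inr ⟨hc, h⟩)
      · rintro ((⟨_, h⟩ | ⟨_, h⟩) | ⟨h, _⟩) <;> exact h
    rw [hdecomp]
    apply MeasurableSet.union
    apply MeasurableSet.union
    · have : IsLowerSet {u : ℝ | u < u₀ ∧ D u < r} := by
        intro u w hwu ⟨h1, h2⟩
        exact ⟨lt_of_le_of_lt hwu h1, lt_of_le_of_lt (hmono w u hwu h1) h2⟩
      exact this.ordConnected.measurableSet
    · have : IsUpperSet {u : ℝ | u₀ < u ∧ D u < r} := by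
        intro u w huw ⟨h1, h2⟩
        exact ⟨lt_of_lt_of_le h1 huw, lt_of_le_of_lt (hanti u w h1 huw) h2⟩
      exact this.ordConnected.measurableSet
    · exact Set.Subsingleton.measurableSet
        (Set.subsingleton_singleton.anti Set.inter_subset_right)

-- step 1 of core: for monotone bounded φK, the integral against h is ≤ 0
lemma core_bounded (h φK : ℝ → ℝ) (K : ℝ) (hK : 0 ≤ K)
    (hmeas : Measurable h)
    (hint : IntegrableOn h (Set.Ioc 0 1))
    (hφKmono : Monotone φK)
    (hφKbd : ∀ u, φK u ∈ Set.Icc (-K) K)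
    (hH : ∀ t ∈ Set.Icc (0:ℝ) 1, 0 ≤ ∫ u in Set.Ioc 0 t, h u)
    (htot : ∫ u in Set.Ioc (0:ℝ) 1, h u = 0) :
    ∫ u in Set.Ioc (0:ℝ) 1, φK u * h u ≤ 0 := by
  have hφKmeas : Measurable φK := hφKmono.measurable
  -- inner section bound: for every λ, ∫ over Ioc 0 1 of indicator {φK > λ} * h ≤ 0
  have hsection : ∀ lam : ℝ,
      (∫ u in Set.Ioc (0:ℝ) 1, (if lam < φK u then h u else 0)) ≤ 0 := by
    intro lam
    set T := {u : ℝ | lam < φK u} with hT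
    have hTup : ∀ a ∈ T, ∀ b, a ≤ b → b ∈ T :=
      fun a ha b hab => lt_of_lt_of_le ha (hφKmono hab)
    set c := sInf (insert (1:ℝ) (T ∩ Set.Ioc 0 1)) with hc
    have hbdd : BddBelow (insert (1:ℝ) (T ∩ Set.Ioc 0 1)) := by
      refine ⟨0, fun x hx => ?_⟩
      rcases hx with rfl | ⟨_, hx2⟩
      · norm_num
      · exact le_of_lt hx2.1
    have hc1 : c ≤ 1 := csInf_le hbdd (Set.mem_insert _ _)
    have hc0 : 0 ≤ c := by
      apply le_csInf ⟨1, Set.mem_insert _ _⟩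
      rintro x (rfl | ⟨_, hx2⟩)
      · norm_num
      · exact le_of_lt hx2.1
    -- pointwise a.e. identification of integrand with indicator of Ioc c 1
    have heq : ∀ u ∈ Set.Ioc (0:ℝ) 1 \ {c},
        (if lam < φK u then h u else 0) = (Set.Ioc c 1).indicator h u := by
      rintro u ⟨hu, huc⟩
      by_cases hmem : lam < φK u
      · have hcu : c ≤ u := csInf_le hbdd (Set.mem_insert_of_mem _ ⟨hmem, hu⟩)
        have : u ∈ Set.Ioc c 1 := ⟨lt_of_le_of_ne hcu (Ne.symm huc), hu.2⟩
        rw [if_pos hmem, Set.indicator_of_mem this]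
      · have : u ∉ Set.Ioc c 1 := by
          intro ⟨hcu, _⟩
          obtain ⟨a, ha, hau⟩ := exists_lt_of_csInf_lt ⟨1, Set.mem_insert _ _⟩ hcu
          rcases ha with rfl | ⟨ha1, _⟩
          · exact absurd hu.2 (not_le.mpr hau)
          · exact hmem (hTup a ha1 u (le_of_lt hau))
        rw [if_neg hmem, Set.indicator_of_notMem this]
    have hae : ∀ᵐ u ∂(volume : Measure ℝ), u ∈ Set.Ioc (0:ℝ) 1 →
        (if lam < φK u then h u else 0) = (Set.Ioc c 1).indicator h u := by
      have hsing : (volume : Measure ℝ) {c} = 0 := measure_singleton c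
      filter_upwards [measure_eq_zero_iff_ae_notMem.mp hsing] with u hu huIoc
      exact heq u ⟨huIoc, hu⟩
    rw [setIntegral_congr_ae measurableSet_Ioc hae]
    rw [setIntegral_indicator measurableSet_Ioc]
    have hinter : Set.Ioc (0:ℝ) 1 ∩ Set.Ioc c 1 = Set.Ioc c 1 := by
      rw [Set.Ioc_inter_Ioc, max_eq_right hc0, min_self]
    rw [hinter]
    -- split the total integral
    have hsplit : (∫ u in Set.Ioc (0:ℝ) c, h u) + (∫ u in Set.Ioc c 1, h u)
        = ∫ u in Set.Ioc (0:ℝ) 1, h u := by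
      rw [← setIntegral_union (Set.Ioc_disjoint_Ioc_of_le le_rfl) measurableSet_Ioc
        (hint.mono_set (Set.Ioc_subset_Ioc_right hc1))
        (hint.mono_set (Set.Ioc_subset_Ioc_left hc0))]
      rw [Set.Ioc_union_Ioc_eq_Ioc hc0 hc1]
    have := hH c ⟨hc0, hc1⟩
    rw [htot] at hsplit
    linarith
  -- Fubini step
  have hprodint : Integrable (Function.uncurry fun u lam =>
      (if lam < φK u then (1:ℝ) else 0) * h u)
      ((volume.restrict (Set.Ioc (0:ℝ) 1)).prod (volume.restrict (Set.Ioc (-K) K))) := by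
    have hmset : MeasurableSet {p : ℝ × ℝ | p.2 < φK p.1} :=
      measurableSet_lt measurable_snd (hφKmeas.comp measurable_fst)
    have hFmeas : Measurable (Function.uncurry fun u lam =>
        (if lam < φK u then (1:ℝ) else 0) * h u) := by
      apply Measurable.mul
      · exact Measurable.ite hmset measurable_const measurable_const
      · exact hmeas.comp measurable_fst
    have hbound : Integrable (fun p : ℝ × ℝ => |h p.1| * 1)
        ((volume.restrict (Set.Ioc (0:ℝ) 1)).prod (volume.restrict (Set.Ioc (-K) K))) :=
      hint.abs.mul_prod (integrable_const 1)
    apply Integrable.mono' hbound hFmeas.aestronglyMeasurable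
    apply Filter.Eventually.of_forall
    intro p
    simp only [Function.uncurry, norm_mul, mul_one]
    by_cases hp : p.2 < φK p.1 <;> simp [hp, abs_nonneg]
  have hswap := integral_integral_swap hprodint
  -- pointwise: ∫ lam indicator = φK u + K
  have hkey : ∀ u : ℝ, (∫ lam in Set.Ioc (-K) K, (if lam < φK u then (1:ℝ) else 0))
      = φK u + K := by
    intro u
    have hb := hφKbd u
    have h1 : (fun lam => (if lam < φK u then (1:ℝ) else 0))
        = (Set.Iio (φK u)).indicator (fun _ => (1:ℝ)) := by
      funext lam
      by_cases hl : lam < φK u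
      · simp [Set.indicator_apply, Set.mem_Iio, hl]
      · simp [Set.indicator_apply, Set.mem_Iio, hl]
    rw [h1, setIntegral_indicator measurableSet_Iio]
    have h2 : Set.Ioc (-K) K ∩ Set.Iio (φK u) = Set.Ioo (-K) (φK u) := by
      ext lam
      simp only [Set.mem_inter_iff, Set.mem_Ioc, Set.mem_Iio, Set.mem_Ioo]
      constructor
      · rintro ⟨⟨ha, _⟩, hb'⟩; exact ⟨ha, hb'⟩
      · rintro ⟨ha, hb'⟩; exact ⟨⟨ha, le_trans (le_of_lt hb') hb.2⟩, hb'⟩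
    rw [h2]
    simp only [setIntegral_const, smul_eq_mul, mul_one]
    rw [Real.volume_real_Ioo_of_le hb.1]
    ring
  -- assemble
  have hintφKh : IntegrableOn (fun u => φK u * h u) (Set.Ioc (0:ℝ) 1) := by
    apply Integrable.bdd_mul hint hφKmeas.aestronglyMeasurable
    apply Filter.Eventually.of_forall
    intro u
    rw [Real.norm_eq_abs, abs_le]
    exact ⟨(hφKbd u).1, (hφKbd u).2⟩
  have hintKh : IntegrableOn (fun u => (φK u + K) * h u) (Set.Ioc (0:ℝ) 1) := by
    apply Integrable.bdd_mul (c := 2 * K) hint (hφKmeas.add measurable_const).aestronglyMeasurable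
    apply Filter.Eventually.of_forall
    intro u
    show ‖φK u + K‖ ≤ 2 * K
    rw [Real.norm_eq_abs, abs_le]
    exact ⟨by linarith [(hφKbd u).1], by linarith [(hφKbd u).2]⟩
  have hdecomp : (∫ u in Set.Ioc (0:ℝ) 1, φK u * h u)
      = (∫ u in Set.Ioc (0:ℝ) 1, (φK u + K) * h u) - K * ∫ u in Set.Ioc (0:ℝ) 1, h u := by
    rw [← integral_const_mul, ← integral_sub hintKh (hint.const_mul K)]
    congr 1
    funext u
    ring
  rw [hdecomp, htot, mul_zero, sub_zero]
  -- now rewrite (φK u + K) * h u as inner integral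
  have hrw : (∫ u in Set.Ioc (0:ℝ) 1, (φK u + K) * h u)
      = ∫ u in Set.Ioc (0:ℝ) 1, ∫ lam in Set.Ioc (-K) K,
          (if lam < φK u then (1:ℝ) else 0) * h u := by
    apply setIntegral_congr_fun measurableSet_Ioc
    intro u _
    show (φK u + K) * h u = _
    rw [← hkey u, ← integral_mul_const]
  rw [hrw, hswap]
  apply integral_nonpos_of_ae
  apply Filter.Eventually.of_forall
  intro lam
  show (∫ u in Set.Ioc (0:ℝ) 1, (if lam < φK u then (1:ℝ) else 0) * h u) ≤ (0:ℝ)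
  have : (∫ u in Set.Ioc (0:ℝ) 1, (if lam < φK u then (1:ℝ) else 0) * h u)
      = ∫ u in Set.Ioc (0:ℝ) 1, (if lam < φK u then h u else 0) := by
    apply setIntegral_congr_fun measurableSet_Ioc
    intro u _
    by_cases hl : lam < φK u <;> simp [hl]
  rw [this]
  exact hsection lam

lemma clamp_abs_le {x K : ℝ} (hK : 0 ≤ K) : |max (-K) (min x K)| ≤ |x| := by
  rcases le_total x 0 with hx | hx
  · rw [min_eq_left (le_trans hx hK)]
    have h1 : max (-K) x ≤ 0 := max_le (by linarith) hx
    rw [abs_of_nonpos h1, abs_of_nonpos hx]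
    have := le_max_right (-K) x
    linarith
  · have h1 : 0 ≤ min x K := le_min hx hK
    rw [max_eq_right (le_trans (neg_nonpos.mpr hK) h1)]
    rw [abs_of_nonneg h1, abs_of_nonneg hx]
    exact min_le_left _ _

lemma core_lemma (h φ : ℝ → ℝ) (hmeas : Measurable h)
    (hint : IntegrableOn h (Set.Ioc 0 1))
    (hφh : IntegrableOn (fun u => φ u * h u) (Set.Ioc 0 1))
    (hmono : ∀ u ∈ Set.Ioc (0:ℝ) 1, ∀ v ∈ Set.Ioc (0:ℝ) 1,
      u ≤ v → h u ≠ 0 → h v ≠ 0 → φ u ≤ φ v)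
    (hH : ∀ t ∈ Set.Icc (0:ℝ) 1, 0 ≤ ∫ u in Set.Ioc 0 t, h u)
    (htot : ∫ u in Set.Ioc (0:ℝ) 1, h u = 0) :
    ∫ u in Set.Ioc (0:ℝ) 1, φ u * h u ≤ 0 := by
  -- truncated monotone envelopes
  set S : ℕ → ℝ → Set ℝ := fun K u =>
    insert (-(K:ℝ)) ((fun v => min (φ v) K) '' {v | v ∈ Set.Ioc (0:ℝ) 1 ∧ v ≤ u ∧ h v ≠ 0})
    with hS
  set φK : ℕ → ℝ → ℝ := fun K u => sSup (S K u) with hφK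
  have hSne : ∀ K u, (S K u).Nonempty := fun K u => ⟨-(K:ℝ), Set.mem_insert _ _⟩
  have hSbdd : ∀ K u, BddAbove (S K u) := by
    intro K u
    refine ⟨(K:ℝ), fun x hx => ?_⟩
    rcases hx with rfl | ⟨v, _, rfl⟩
    · exact neg_le_self (Nat.cast_nonneg K)
    · exact min_le_right _ _
  have hbd : ∀ (K : ℕ) (u : ℝ), φK K u ∈ Set.Icc (-(K:ℝ)) (K:ℝ) := by
    intro K u
    constructor
    · exact le_csSup (hSbdd K u) (Set.mem_insert _ _)
    · apply csSup_le (hSne K u)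
      rintro x (rfl | ⟨v, _, rfl⟩)
      · exact neg_le_self (Nat.cast_nonneg K)
      · exact min_le_right _ _
  have hmonoK : ∀ K : ℕ, Monotone (φK K) := by
    intro K u v huv
    apply csSup_le_csSup (hSbdd K v) (hSne K u)
    apply Set.insert_subset_insert
    apply Set.image_mono
    rintro w ⟨h1, h2, h3⟩
    exact ⟨h1, le_trans h2 huv, h3⟩
  have heqK : ∀ (K : ℕ) (u : ℝ), u ∈ Set.Ioc (0:ℝ) 1 → h u ≠ 0 →
      φK K u = max (-(K:ℝ)) (min (φ u) K) := by
    intro K u hu hhu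
    apply le_antisymm
    · apply csSup_le (hSne K u)
      rintro x (rfl | ⟨v, ⟨hv1, hv2, hv3⟩, rfl⟩)
      · exact le_max_left _ _
      · exact le_max_of_le_right (min_le_min (hmono v hv1 u hu hv2 hv3 hhu) le_rfl)
    · apply max_le
      · exact le_csSup (hSbdd K u) (Set.mem_insert _ _)
      · exact le_csSup (hSbdd K u)
          (Set.mem_insert_of_mem _ ⟨u, ⟨hu, le_refl u, hhu⟩, rfl⟩)
  -- each truncation has nonpositive integral
  have hle : ∀ K : ℕ, (∫ u in Set.Ioc (0:ℝ) 1, φK K u * h u) ≤ 0 := by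
    intro K
    exact core_bounded h (φK K) K (Nat.cast_nonneg K) hmeas hint (hmonoK K) (hbd K) hH htot
  -- dominated convergence
  have hlim : Filter.Tendsto (fun K : ℕ => ∫ u in Set.Ioc (0:ℝ) 1, φK K u * h u)
      Filter.atTop (nhds (∫ u in Set.Ioc (0:ℝ) 1, φ u * h u)) := by
    apply tendsto_integral_of_dominated_convergence (fun u => |φ u * h u|)
    · intro K
      exact (((hmonoK K).measurable).mul hmeas).aestronglyMeasurable
    · exact hφh.abs
    · intro K
      rw [ae_restrict_iff' measurableSet_Ioc]
      apply Filter.Eventually.of_forall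
      intro u hu
      by_cases hhu : h u = 0
      · simp [hhu]
      · rw [heqK K u hu hhu]
        rw [Real.norm_eq_abs, abs_mul, abs_mul]
        exact mul_le_mul_of_nonneg_right (clamp_abs_le (Nat.cast_nonneg K)) (abs_nonneg _)
    · rw [ae_restrict_iff' measurableSet_Ioc]
      apply Filter.Eventually.of_forall
      intro u hu
      by_cases hhu : h u = 0
      · simp [hhu]
      · apply Filter.Tendsto.congr' _ tendsto_const_nhds
        rw [Filter.EventuallyEq, Filter.eventually_atTop]
        refine ⟨⌈|φ u|⌉₊, fun K hK => ?_⟩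
        have hK' : |φ u| ≤ (K:ℝ) := le_trans (Nat.le_ceil _) (Nat.cast_le.mpr hK)
        rw [heqK K u hu hhu]
        rw [abs_le] at hK'
        rw [min_eq_left hK'.2, max_eq_right (by linarith [hK'.1] : -(K:ℝ) ≤ φ u)]
  exact le_of_tendsto hlim (Filter.Eventually.of_forall hle)

theorem concave_majorization_comparison
    (f g ghat : ℝ → ℝ)
    (hf : ConcaveOn ℝ (Set.Icc (0:ℝ) 1) f)
    (hg : ∀ u ∈ Set.Icc (0:ℝ) 1, g u ∈ Set.Icc (0:ℝ) 1)
    (hghat : ∀ u ∈ Set.Icc (0:ℝ) 1, ghat u ∈ Set.Icc (0:ℝ) 1)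
    (hgmono : AntitoneOn g (Set.Icc (0:ℝ) 1))
    (hghatmono : AntitoneOn ghat (Set.Icc (0:ℝ) 1))
    (htotal : ∫ u in (0:ℝ)..1, g u = ∫ u in (0:ℝ)..1, ghat u)
    (hpartial : ∀ t ∈ Set.Icc (0:ℝ) 1,
      ∫ u in (0:ℝ)..t, ghat u ≤ ∫ u in (0:ℝ)..t, g u) :
    ∫ u in (0:ℝ)..1, f (g u) ≤ ∫ u in (0:ℝ)..1, f (ghat u) := by
  classical
  set proj : ℝ → ℝ := fun u => max (min u 1) 0 with hproj
  have hprojmono : Monotone proj := fun a b hab =>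
    max_le_max (min_le_min hab le_rfl) le_rfl
  have hprojmem : ∀ u, proj u ∈ Set.Icc (0:ℝ) 1 :=
    fun u => ⟨le_max_right _ _, max_le (min_le_right _ _) zero_le_one⟩
  have hprojeq : ∀ u ∈ Set.Icc (0:ℝ) 1, proj u = u := by
    intro u hu
    simp only [hproj]
    rw [min_eq_left hu.2, max_eq_left hu.1]
  set G : ℝ → ℝ := fun u => g (proj u) with hG
  set Ghat : ℝ → ℝ := fun u => ghat (proj u) with hGhat
  have hGanti : Antitone G := fun a b hab =>
    hgmono (hprojmem a) (hprojmem b) (hprojmono hab)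
  have hGhatanti : Antitone Ghat := fun a b hab =>
    hghatmono (hprojmem a) (hprojmem b) (hprojmono hab)
  have hGmem : ∀ u, G u ∈ Set.Icc (0:ℝ) 1 := fun u => hg _ (hprojmem u)
  have hGhatmem : ∀ u, Ghat u ∈ Set.Icc (0:ℝ) 1 := fun u => hghat _ (hprojmem u)
  have hGconst : ∀ u ≤ (0:ℝ), G u = G 0 := by
    intro u hu
    have : proj u = proj 0 := by
      simp only [hproj]
      rw [min_eq_left (le_trans hu zero_le_one), max_eq_right hu]
      norm_num
    simp only [hG, this]
  have hGhatconst : ∀ u ≤ (0:ℝ), Ghat u = Ghat 0 := by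
    intro u hu
    have : proj u = proj 0 := by
      simp only [hproj]
      rw [min_eq_left (le_trans hu zero_le_one), max_eq_right hu]
      norm_num
    simp only [hGhat, this]
  -- measurability
  have hGmeas : Measurable G := hGanti.measurable
  have hGhatmeas : Measurable Ghat := hGhatanti.measurable
  have hfGmeas : Measurable (fun u => f (G u)) :=
    concave_comp_measurable hf hGanti hGmem hGconst
  have hfGhatmeas : Measurable (fun u => f (Ghat u)) :=
    concave_comp_measurable hf hGhatanti hGhatmem hGhatconst
  obtain ⟨M, hM⟩ := concave_bounded hf
  have hIocfin : (volume : Measure ℝ) (Set.Ioc (0:ℝ) 1) < ⊤ := measure_Ioc_lt_top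
  -- integrability of the compositions
  have hfGint : IntegrableOn (fun u => f (G u)) (Set.Ioc (0:ℝ) 1) := by
    apply Integrable.mono' (integrableOn_const hIocfin.ne)
      hfGmeas.aestronglyMeasurable
    exact Filter.Eventually.of_forall fun u => hM _ (hGmem u)
  have hfGhatint : IntegrableOn (fun u => f (Ghat u)) (Set.Ioc (0:ℝ) 1) := by
    apply Integrable.mono' (integrableOn_const hIocfin.ne)
      hfGhatmeas.aestronglyMeasurable
    exact Filter.Eventually.of_forall fun u => hM _ (hGhatmem u)
  have hGint : IntegrableOn G (Set.Ioc (0:ℝ) 1) := by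
    apply Integrable.mono' (integrableOn_const (C := (1:ℝ)) hIocfin.ne)
      hGmeas.aestronglyMeasurable
    apply Filter.Eventually.of_forall
    intro u
    rw [Real.norm_eq_abs, abs_le]
    exact ⟨by linarith [(hGmem u).1], (hGmem u).2⟩
  have hGhatint : IntegrableOn Ghat (Set.Ioc (0:ℝ) 1) := by
    apply Integrable.mono' (integrableOn_const (C := (1:ℝ)) hIocfin.ne)
      hGhatmeas.aestronglyMeasurable
    apply Filter.Eventually.of_forall
    intro u
    rw [Real.norm_eq_abs, abs_le]
    exact ⟨by linarith [(hGhatmem u).1], (hGhatmem u).2⟩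
  set h : ℝ → ℝ := fun u => G u - Ghat u with hh
  set φ : ℝ → ℝ := fun u =>
    if G u = Ghat u then 0 else (f (G u) - f (Ghat u)) / (G u - Ghat u) with hφ
  have hkey : ∀ u, φ u * h u = f (G u) - f (Ghat u) := by
    intro u
    by_cases hc : G u = Ghat u
    · simp only [hφ, hh, if_pos hc, hc, zero_mul, sub_self]
    · simp only [hφ, hh, if_neg hc]
      rw [div_mul_cancel₀ _ (sub_ne_zero.mpr hc)]
  have hmeas : Measurable h := hGmeas.sub hGhatmeas
  have hint : IntegrableOn h (Set.Ioc (0:ℝ) 1) := hGint.sub hGhatint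
  have hφh : IntegrableOn (fun u => φ u * h u) (Set.Ioc (0:ℝ) 1) := by
    have : (fun u => φ u * h u) = fun u => f (G u) - f (Ghat u) := funext hkey
    rw [this]
    exact hfGint.sub hfGhatint
  -- partial integrals
  have hpart : ∀ t ∈ Set.Icc (0:ℝ) 1, (∫ u in Set.Ioc 0 t, h u)
      = (∫ u in (0:ℝ)..t, g u) - ∫ u in (0:ℝ)..t, ghat u := by
    intro t ht
    have h1 : ∫ u in Set.Ioc 0 t, h u
        = (∫ u in Set.Ioc 0 t, G u) - ∫ u in Set.Ioc 0 t, Ghat u :=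
      integral_sub (hGint.mono_set (Set.Ioc_subset_Ioc_right ht.2))
        (hGhatint.mono_set (Set.Ioc_subset_Ioc_right ht.2))
    have h2 : ∫ u in Set.Ioc 0 t, G u = ∫ u in (0:ℝ)..t, g u := by
      rw [intervalIntegral.integral_of_le ht.1]
      apply setIntegral_congr_fun measurableSet_Ioc
      intro u hu
      simp only [hG]
      rw [hprojeq u ⟨le_of_lt hu.1, le_trans hu.2 ht.2⟩]
    have h3 : ∫ u in Set.Ioc 0 t, Ghat u = ∫ u in (0:ℝ)..t, ghat u := by
      rw [intervalIntegral.integral_of_le ht.1]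
      apply setIntegral_congr_fun measurableSet_Ioc
      intro u hu
      simp only [hGhat]
      rw [hprojeq u ⟨le_of_lt hu.1, le_trans hu.2 ht.2⟩]
    rw [h1, h2, h3]
  have hone : (1:ℝ) ∈ Set.Icc (0:ℝ) 1 := by norm_num
  have hH : ∀ t ∈ Set.Icc (0:ℝ) 1, 0 ≤ ∫ u in Set.Ioc 0 t, h u := by
    intro t ht
    rw [hpart t ht]
    linarith [hpartial t ht]
  have htot : ∫ u in Set.Ioc (0:ℝ) 1, h u = 0 := by
    rw [hpart 1 hone]
    linarith [htotal]
  -- monotonicity of φ on the support of h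
  have hmono : ∀ u ∈ Set.Ioc (0:ℝ) 1, ∀ v ∈ Set.Ioc (0:ℝ) 1,
      u ≤ v → h u ≠ 0 → h v ≠ 0 → φ u ≤ φ v := by
    intro u hu v hv huv hhu hhv
    have hne_u : G u ≠ Ghat u := fun hc => hhu (by simp [hh, hc])
    have hne_v : G v ≠ Ghat v := fun hc => hhv (by simp [hh, hc])
    simp only [hφ, if_neg hne_u, if_neg hne_v]
    exact slope_pair hf (hGhatmem u) (hGmem u) (hGhatmem v) (hGmem v)
      (hGhatanti huv) (hGanti huv) (Ne.symm hne_u) (Ne.symm hne_v)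
  have hcore := core_lemma h φ hmeas hint hφh hmono hH htot
  -- conclude
  have hfin1 : ∫ u in (0:ℝ)..1, f (g u) = ∫ u in Set.Ioc (0:ℝ) 1, f (G u) := by
    rw [intervalIntegral.integral_of_le (zero_le_one)]
    apply setIntegral_congr_fun measurableSet_Ioc
    intro u hu
    simp only [hG]
    rw [hprojeq u ⟨le_of_lt hu.1, hu.2⟩]
  have hfin2 : ∫ u in (0:ℝ)..1, f (ghat u) = ∫ u in Set.Ioc (0:ℝ) 1, f (Ghat u) := by
    rw [intervalIntegral.integral_of_le (zero_le_one)]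
    apply setIntegral_congr_fun measurableSet_Ioc
    intro u hu
    simp only [hGhat]
    rw [hprojeq u ⟨le_of_lt hu.1, hu.2⟩]
  have hφhint : ∫ u in Set.Ioc (0:ℝ) 1, φ u * h u
      = (∫ u in Set.Ioc (0:ℝ) 1, f (G u)) - ∫ u in Set.Ioc (0:ℝ) 1, f (Ghat u) := by
    rw [show (fun u => φ u * h u) = fun u => f (G u) - f (Ghat u) from funext hkey]
    exact integral_sub hfGint hfGhatint
  rw [hfin1, hfin2]
  rw [hφhint] at hcore
  linarith
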